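/- Let (g, t) be a construction with split ((g′, t), ics), where CTS(g′, t) = [tr1,…,trn]. Then g = g′ ∪ icg(tr1) ∪ ⋯ ∪ icg(trn); that is, the union of the generator's graph with all induced construction graphs is the whole graph g. -/

import Mathlib

namespace RST

/-! ## Type systems -/

/-- A relation (given as a set of pairs) is a partial order on the set `Ty`. -/
def IsPartialOrderOn {U : Type*} (Ty : Set U) (le : Set (U × U)) : Prop :=
  (∀ p ∈ le, p.1 ∈ Ty ∧ p.2 ∈ Ty) ∧
  (∀ τ ∈ Ty, (τ, τ) ∈ le) ∧
  (∀ a b : U, (a, b) ∈ le → (b, a) ∈ le → a = b) ∧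
  (∀ a b c : U, (a, b) ∈ le → (b, c) ∈ le → (a, c) ∈ le)

/-- The subtype closure of `Ty'` in the type system `(Ty, le)`. -/
def subtypeClosure {U : Type*} (Ty : Set U) (le : Set (U × U)) (Ty' : Set U) : Set U :=
  {τ | τ ∈ Ty ∧ ∃ τ' ∈ Ty', (τ, τ') ∈ le}

/-- The set of all subtype closures of subsets of `Ty`. -/
def SC {U : Type*} (Ty : Set U) (le : Set (U × U)) : Set (Set U) :=
  {S | ∃ Ty' ⊆ Ty, S = subtypeClosure Ty le Ty'}

/-- The candidate order of an upper bound extension: the reflexive closure (on `Ty ∪ Tystar`)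
of `le` together with the pairs `(τ, f S)` for `τ ∈ S ∈ SC Ty le`. -/
def upperBoundRel {U : Type*} (Ty Tystar : Set U) (le : Set (U × U)) (f : Set U → U) :
    Set (U × U) :=
  (le ∪ {p : U × U | ∃ S ∈ SC Ty le, p.1 ∈ S ∧ p.2 = f S}) ∪
    {p : U × U | p.1 = p.2 ∧ p.1 ∈ Ty ∪ Tystar}

/-! ## Graphs -/

/-- A (raw) directed labelled bipartite graph: tokens `Tk`, configurators `Cf`, arrows `Arr`,
incidence, arrow indices and vertex labels all given relationally (as sets of pairs), so that
unions of graphs are componentwise unions. -/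
structure PreGraph (V A L : Type*) where
  Tk : Set V
  Cf : Set V
  Arr : Set A
  inc : Set (A × (V × V))
  ia : Set (A × ℕ)
  tl : Set (V × L)
  cl : Set (V × L)

variable {V A L : Type*}

instance : Union (PreGraph V A L) :=
  ⟨fun g h =>
    ⟨g.Tk ∪ h.Tk, g.Cf ∪ h.Cf, g.Arr ∪ h.Arr, g.inc ∪ h.inc, g.ia ∪ h.ia,
      g.tl ∪ h.tl, g.cl ∪ h.cl⟩⟩

def PreGraph.Subgraph (h g : PreGraph V A L) : Prop :=
  h.Tk ⊆ g.Tk ∧ h.Cf ⊆ g.Cf ∧ h.Arr ⊆ g.Arr ∧ h.inc ⊆ g.inc ∧ h.ia ⊆ g.ia ∧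
    h.tl ⊆ g.tl ∧ h.cl ⊆ g.cl

/-- The vertices adjacent to `u` (together with `u`). -/
def PreGraph.adjTo (g : PreGraph V A L) (u : V) : Set V :=
  {u} ∪ {v | ∃ a ∈ g.Arr, (a, (v, u)) ∈ g.inc ∨ (a, (u, v)) ∈ g.inc}

/-- The arrows incident to `u`. -/
def PreGraph.incidentArrows (g : PreGraph V A L) (u : V) : Set A :=
  {a | a ∈ g.Arr ∧ ∃ v, (a, (v, u)) ∈ g.inc ∨ (a, (u, v)) ∈ g.inc}

/-- The restriction of a graph to given vertex and arrow sets. -/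
def PreGraph.restrict (g : PreGraph V A L) (Vs : Set V) (As : Set A) : PreGraph V A L :=
  ⟨g.Tk ∩ Vs, g.Cf ∩ Vs, g.Arr ∩ As, {q | q ∈ g.inc ∧ q.1 ∈ As},
    {q | q ∈ g.ia ∧ q.1 ∈ As}, {q | q ∈ g.tl ∧ q.1 ∈ Vs}, {q | q ∈ g.cl ∧ q.1 ∈ Vs}⟩

/-- The neighbourhood of a vertex `u`. -/
def PreGraph.Nh (g : PreGraph V A L) (u : V) : PreGraph V A L :=
  g.restrict (g.adjTo u) (g.incidentArrows u)

/-- A set of pairs is (the graph of) a function with domain `D`. -/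
def IsFunctionOn {α β : Type*} (R : Set (α × β)) (D : Set α) : Prop :=
  (∀ p ∈ R, p.1 ∈ D) ∧ ∀ x ∈ D, ∃! y, (x, y) ∈ R

/-- A raw graph is a genuine directed labelled bipartite graph. -/
def IsGraph (g : PreGraph V A L) : Prop :=
  Disjoint g.Tk g.Cf ∧
  IsFunctionOn g.inc g.Arr ∧
  (∀ a v w, (a, (v, w)) ∈ g.inc → (v ∈ g.Tk ∧ w ∈ g.Cf) ∨ (v ∈ g.Cf ∧ w ∈ g.Tk)) ∧
  IsFunctionOn g.ia g.Arr ∧ IsFunctionOn g.tl g.Tk ∧ IsFunctionOn g.cl g.Cf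

/-- `ars` is the list of incoming arrows of `u`, listed in increasing index order
(the arrow at position `i` carries index `i+1`). -/
def InArrowSeq (g : PreGraph V A L) (u : V) (ars : List A) : Prop :=
  ars.Nodup ∧ (∀ a : A, a ∈ ars ↔ a ∈ g.Arr ∧ ∃ w, (a, (w, u)) ∈ g.inc) ∧
  ∀ (i : ℕ) (a : A), ars[i]? = some a → (a, i + 1) ∈ g.ia

/-- `t` is an output token of the configurator `u`. -/
def OutputTok (g : PreGraph V A L) (u t : V) : Prop :=
  ∃ a ∈ g.Arr, (a, (u, t)) ∈ g.inc

/-- `ts` is the input token-sequence of the configurator `u`. -/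
def InputTokSeq (g : PreGraph V A L) (u : V) (ts : List V) : Prop :=
  ∃ ars : List A, InArrowSeq g u ars ∧
    List.Forall₂ (fun a v => (a, (v, u)) ∈ g.inc) ars ts

/-- `τs` is the input type-sequence of the configurator `u`. -/
def InputTypeSeq (g : PreGraph V A L) (u : V) (τs : List L) : Prop :=
  ∃ ts : List V, InputTokSeq g u ts ∧ List.Forall₂ (fun v τ => (v, τ) ∈ g.tl) ts τs

/-- `g` is a configuration of the constructor `c` (with signature `(ins, out)`),
whose single configurator is `u`. -/
def IsConfiguration (le : Set (L × L)) (g : PreGraph V A L) (u : V) (c : L)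
    (ins : List L) (out : L) : Prop :=
  IsGraph g ∧ g.Cf = {u} ∧ (u, c) ∈ g.cl ∧
  g.Tk = {v | ∃ a ∈ g.Arr, (a, (v, u)) ∈ g.inc ∨ (a, (u, v)) ∈ g.inc} ∧
  (∃! a0 : A, a0 ∈ g.Arr ∧ ∃ w, (a0, (u, w)) ∈ g.inc) ∧
  (∀ a0 ∈ g.Arr, ∀ w : V, (a0, (u, w)) ∈ g.inc →
      (a0, 0) ∈ g.ia ∧ ∃ σ, (w, σ) ∈ g.tl ∧ (σ, out) ∈ le) ∧
  (∃ ars : List A, InArrowSeq g u ars ∧ ars.length = ins.length ∧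
    ∀ (i : ℕ) (a : A) (τ : L), ars[i]? = some a → ins[i]? = some τ →
      ∃ w σ, (a, (w, u)) ∈ g.inc ∧ (w, σ) ∈ g.tl ∧ (σ, τ) ∈ le)

/-- A structure graph for the constructor specification `(C, sig)` over types `(Ty, le)`. -/
def IsStructureGraph (Ty : Set L) (le : Set (L × L)) (C : Set L)
    (sig : Set (L × (List L × L))) (g : PreGraph V A L) : Prop :=
  IsGraph g ∧ (∀ x τ, (x, τ) ∈ g.tl → τ ∈ Ty) ∧
  ∀ u ∈ g.Cf, ∃ c ins out, (u, c) ∈ g.cl ∧ c ∈ C ∧ (c, (ins, out)) ∈ sig ∧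
    IsConfiguration le (g.Nh u) u c ins out

/-! ## Construction spaces -/

/-- The raw data of a construction space: a type system, a constructor specification and
a structure graph. -/
structure CSpace (V A L : Type*) where
  Ty : Set L
  le : Set (L × L)
  C : Set L
  sig : Set (L × (List L × L))
  G : PreGraph V A L

instance : Union (CSpace V A L) :=
  ⟨fun c d => ⟨c.Ty ∪ d.Ty, c.le ∪ d.le, c.C ∪ d.C, c.sig ∪ d.sig, c.G ∪ d.G⟩⟩

/-- The raw data forms a genuine construction space. -/
def IsCSpace (Cs : CSpace V A L) : Prop :=
  IsPartialOrderOn Cs.Ty Cs.le ∧ Disjoint Cs.C Cs.Ty ∧ IsFunctionOn Cs.sig Cs.C ∧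
  (∀ c ins out, (c, (ins, out)) ∈ Cs.sig →
      ins ≠ [] ∧ (∀ τ ∈ ins, τ ∈ Cs.Ty) ∧ out ∈ Cs.Ty) ∧
  IsStructureGraph Cs.Ty Cs.le Cs.C Cs.sig Cs.G

/-- Token-functionality of the constructors of a structure graph. -/
def TokenFunctional (g : PreGraph V A L) : Prop :=
  ∀ u u' c, u ∈ g.Cf → u' ∈ g.Cf → (u, c) ∈ g.cl → (u', c) ∈ g.cl →
    ∀ ts, InputTokSeq g u ts → InputTokSeq g u' ts →
      ∀ t t', OutputTok g u t → OutputTok g u' t' → t = t'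

/-- Type-functionality of the constructors of a structure graph. -/
def TypeFunctional (g : PreGraph V A L) : Prop :=
  ∀ u u' c, u ∈ g.Cf → u' ∈ g.Cf → (u, c) ∈ g.cl → (u', c) ∈ g.cl →
    ∀ τs, InputTypeSeq g u τs → InputTypeSeq g u' τs →
      ∀ t t' τ τ', OutputTok g u t → OutputTok g u' t' →
        (t, τ) ∈ g.tl → (t', τ') ∈ g.tl → τ = τ'

def IsFunctionalGraph (g : PreGraph V A L) : Prop :=
  TokenFunctional g ∧ TypeFunctional g

/-! ## Representational systems -/

/-- The raw data of a representational system: grammatical, entailment and identification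
spaces. -/
structure RSystem (V A L : Type*) where
  Gs : CSpace V A L
  Es : CSpace V A L
  Is : CSpace V A L

instance : Union (RSystem V A L) :=
  ⟨fun r s => ⟨r.Gs ∪ s.Gs, r.Es ∪ s.Es, r.Is ∪ s.Is⟩⟩

/-- The universal space of a representational system. -/
def RSystem.uspace (R : RSystem V A L) : CSpace V A L := (R.Gs ∪ R.Es) ∪ R.Is

/-- `R` is a representational system formed over the type system `(Ty, le)` and the
meta-type system `(MTy, Mle)`. -/
def IsRSystem (R : RSystem V A L) (Ty : Set L) (le : Set (L × L))
    (MTy : Set L) (Mle : Set (L × L)) : Prop :=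
  IsPartialOrderOn Ty le ∧ IsPartialOrderOn MTy Mle ∧
  IsPartialOrderOn (Ty ∪ MTy) (le ∪ Mle) ∧
  R.Gs.Ty = Ty ∧ R.Gs.le = le ∧ IsCSpace R.Gs ∧ IsFunctionalGraph R.Gs.G ∧
  R.Es.Ty = Ty ∧ R.Es.le = le ∧ IsCSpace R.Es ∧ R.Es.G.Tk ⊆ R.Gs.G.Tk ∧
  R.Is.Ty = Ty ∪ MTy ∧ R.Is.le = le ∪ Mle ∧ IsCSpace R.Is ∧
  (∀ x ∈ R.Is.G.Tk, x ∉ R.Gs.G.Tk → ∃ τ ∈ MTy, (x, τ) ∈ R.Is.G.tl) ∧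
  (∀ x ∈ R.Is.G.Tk, (∃ u ∈ R.Is.G.Cf, OutputTok R.Is.G u x) → x ∉ R.Gs.G.Tk) ∧
  IsCSpace (R.Gs ∪ R.Es) ∧ IsCSpace (R.Gs ∪ R.Is) ∧ IsCSpace (R.Es ∪ R.Is) ∧
  Disjoint R.Gs.C R.Es.C ∧ Disjoint R.Gs.C R.Is.C ∧ Disjoint R.Es.C R.Is.C

/-- `(R, R', Is'')` is an inter-representational-system encoding, where `R` is formed over
`(Ty, le)` and `(MTy, Mle)`, `R'` over `(Ty', le')` and `(MTy', Mle')`, and `Is''` is an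
identification space formed over `(Ty ∪ Ty', le ∪ le')` and `(MTy'', Mle'')`. -/
def IsIRSE (R R' : RSystem V A L) (Is'' : CSpace V A L)
    (Ty : Set L) (le : Set (L × L)) (MTy : Set L) (Mle : Set (L × L))
    (Ty' : Set L) (le' : Set (L × L)) (MTy' : Set L) (Mle' : Set (L × L))
    (MTy'' : Set L) (Mle'' : Set (L × L)) : Prop :=
  IsRSystem R Ty le MTy Mle ∧ IsRSystem R' Ty' le' MTy' Mle' ∧
  IsRSystem (R ∪ R') (Ty ∪ Ty') (le ∪ le') (MTy ∪ MTy') (Mle ∪ Mle') ∧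
  IsPartialOrderOn MTy'' Mle'' ∧
  IsPartialOrderOn ((Ty ∪ Ty') ∪ MTy'') ((le ∪ le') ∪ Mle'') ∧
  Is''.Ty = (Ty ∪ Ty') ∪ MTy'' ∧ Is''.le = (le ∪ le') ∪ Mle'' ∧ IsCSpace Is'' ∧
  MTy ∪ MTy' ⊆ MTy'' ∧ Mle ∪ Mle' ⊆ Mle'' ∧
  (∀ x ∈ Is''.G.Tk, x ∉ (R.Gs ∪ R'.Gs).G.Tk → ∃ τ ∈ MTy'', (x, τ) ∈ Is''.G.tl) ∧
  (∀ x ∈ Is''.G.Tk, (∃ u ∈ Is''.G.Cf, OutputTok Is''.G u x) →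
      x ∉ (R.Gs ∪ R'.Gs).G.Tk) ∧
  IsCSpace ((R.Gs ∪ R'.Gs) ∪ Is'') ∧ IsCSpace ((R.Es ∪ R'.Es) ∪ Is'') ∧
  IsCSpace ((R.Is ∪ R'.Is) ∪ Is'') ∧
  Disjoint Is''.C (R.Gs ∪ R'.Gs).C ∧ Disjoint Is''.C (R.Es ∪ R'.Es).C ∧
  Disjoint Is''.C (R.Is ∪ R'.Is).C

/-! ## Trails -/

/-- A trail candidate: a list of arrows together with an associated source and target vertex
(needed for the empty trail `[]_v`). -/
structure Trail (V A : Type*) where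
  arrows : List A
  src : V
  tgt : V

/-- The empty trail `[]_v`. -/
def Trail.nil {V A : Type*} (v : V) : Trail V A := ⟨[], v, v⟩

/-- Concatenation `e ⊕ w` of trails. -/
def Trail.append {V A : Type*} (e w : Trail V A) : Trail V A :=
  ⟨e.arrows ++ w.arrows, e.src, w.tgt⟩

/-- The image of a trail under vertex/arrow maps. -/
def Trail.map {V A : Type*} (fv : V → V) (fa : A → A) (tr : Trail V A) : Trail V A :=
  ⟨tr.arrows.map fa, fv tr.src, fv tr.tgt⟩

/-- The arrows chain through the graph from `s` to `t`. -/
def ChainIn (g : PreGraph V A L) : List A → V → V → Prop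
  | [], s, t => s = t
  | a :: rest, s, t => a ∈ g.Arr ∧ ∃ m, (a, (s, m)) ∈ g.inc ∧ ChainIn g rest m t

/-- `tr` is a trail in `g`. -/
def IsTrailIn (g : PreGraph V A L) (tr : Trail V A) : Prop :=
  tr.arrows.Nodup ∧ ChainIn g tr.arrows tr.src tr.tgt ∧
  tr.src ∈ g.Tk ∪ g.Cf ∧ tr.tgt ∈ g.Tk ∪ g.Cf

/-- A trail is well-formed provided its source and target are tokens. -/
def WellFormed (g : PreGraph V A L) (tr : Trail V A) : Prop :=
  tr.src ∈ g.Tk ∧ tr.tgt ∈ g.Tk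

/-- `tr` is (source-)extendable by the arrow `a`. -/
def ExtendableBy (g : PreGraph V A L) (tr : Trail V A) (a : A) : Prop :=
  a ∈ g.Arr ∧ a ∉ tr.arrows ∧ ∃ s, (a, (s, tr.src)) ∈ g.inc

def Extendable (g : PreGraph V A L) (tr : Trail V A) : Prop :=
  ∃ a, ExtendableBy g tr a

def NonExtendable (g : PreGraph V A L) (tr : Trail V A) : Prop :=
  ¬ Extendable g tr

/-- `TES g tr S` holds iff `S` is the trail extension sequence of the trail `tr` in `g`,
following the recursive definition of TES. -/
inductive TES (g : PreGraph V A L) : Trail V A → List (Trail V A) → Prop where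
  | nonext (tr : Trail V A) (h : NonExtendable g tr) :
      TES g tr [⟨[], tr.src, tr.src⟩]
  | ext (tr : Trail V A) (a : A) (u : V) (ars : List A)
      (Ss : List (List (Trail V A)))
      (hext : ExtendableBy g tr a)
      (hinc : (a, (u, tr.src)) ∈ g.inc)
      (hars : InArrowSeq g u ars)
      (hlen : Ss.length = ars.length)
      (hrec : ∀ (i : ℕ) (ai : A) (si : V) (Si : List (Trail V A)),
          ars[i]? = some ai → Ss[i]? = some Si → (ai, (si, u)) ∈ g.inc →
          TES g ⟨ai :: a :: tr.arrows, si, tr.tgt⟩ Si) :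
      TES g tr (List.flatten (List.zipWith
        (fun (ai : A) (Si : List (Trail V A)) =>
          Si.map (fun e => (⟨e.arrows ++ [ai, a], e.src, tr.src⟩ : Trail V A)))
        ars Ss))

/-- The sequence of sources of a sequence of trails. -/
def srcSeq {V A : Type*} (S : List (Trail V A)) : List V := S.map Trail.src

/-- The right product `S ◁ w`, appending the trail `w` to each trail in `S`. -/
def rprod {V A : Type*} (S : List (Trail V A)) (w : Trail V A) : List (Trail V A) :=
  S.map fun e => e.append w

/-! ## Constructions -/

/-- Every token is the target of at most one arrow. -/
def UniStructured (g : PreGraph V A L) : Prop :=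
  ∀ x ∈ g.Tk, ∀ a ∈ g.Arr, ∀ b ∈ g.Arr,
    (∃ w, (a, (w, x)) ∈ g.inc) → (∃ w, (b, (w, x)) ∈ g.inc) → a = b

/-- `(g, t)` is a construction in the construction space `Cs`: `g` is a finite uni-structured
structure graph (a subgraph of the structure graph of `Cs`), `t` is a token of `g`, and every
vertex of `g` is the source of a trail targeting `t`. -/
def IsConstruction (Cs : CSpace V A L) (g : PreGraph V A L) (t : V) : Prop :=
  g.Subgraph Cs.G ∧ IsStructureGraph Cs.Ty Cs.le Cs.C Cs.sig g ∧
  g.Tk.Finite ∧ g.Cf.Finite ∧ g.Arr.Finite ∧ UniStructured g ∧ t ∈ g.Tk ∧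
  ∀ v ∈ g.Tk ∪ g.Cf, ∃ tr : Trail V A, IsTrailIn g tr ∧ tr.src = v ∧ tr.tgt = t

/-- `(g, t)` is a construction *in* `Cs` in the strong sense: moreover every configurator of `g`
has its full neighbourhood from the structure graph of `Cs`. -/
def IsConstructionIn (Cs : CSpace V A L) (g : PreGraph V A L) (t : V) : Prop :=
  IsConstruction Cs g t ∧ ∀ u ∈ g.Cf, g.Nh u = Cs.G.Nh u

/-- A trivial construction: the construct is its only vertex. -/
def TrivialC (g : PreGraph V A L) (t : V) : Prop := g.Tk ∪ g.Cf = {t}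

/-- A basic construction: exactly one configurator. -/
def BasicC (g : PreGraph V A L) : Prop := ∃ u, g.Cf = {u}

/-- The set of arrows occurring in a sequence of trails. -/
def trailArrowSet {V A : Type*} (TR : List (Trail V A)) : Set A :=
  {a | ∃ tr ∈ TR, a ∈ tr.arrows}

/-- The vertices of the `TR`-graph: vertices incident to arrows of trails of `TR`,
together with the associated vertex of any empty trail of `TR`. -/
def trailVertexSet (g : PreGraph V A L) (TR : List (Trail V A)) : Set V :=
  {v | (∃ a ∈ trailArrowSet TR, ∃ w, (a, (v, w)) ∈ g.inc ∨ (a, (w, v)) ∈ g.inc) ∨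
    ∃ tr ∈ TR, tr.arrows = [] ∧ tr.src = v}

/-- The `TR`-graph `v(TR)`. -/
def trGraph (g : PreGraph V A L) (TR : List (Trail V A)) : PreGraph V A L :=
  g.restrict (trailVertexSet g TR) (trailArrowSet TR)

/-- `((g', t), ics)` is a split of the construction `(g, t)`: `(g', t)` is a generator and
`ics` is the corresponding induced construction sequence (each induced construction is
`(v(TES(tri)), source(tri))`, the TES being computed in `(g, t)`). -/
def IsSplit (Cs : CSpace V A L) (g : PreGraph V A L) (t : V)
    (g' : PreGraph V A L) (ics : List (PreGraph V A L × V)) : Prop :=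
  IsConstruction Cs g' t ∧ g'.Subgraph g ∧
  ∃ trs : List (Trail V A), TES g' (Trail.nil t) trs ∧ ics.length = trs.length ∧
    ∀ (i : ℕ) (tri : Trail V A), trs[i]? = some tri →
      ∃ Si : List (Trail V A), TES g tri Si ∧ ics[i]? = some (trGraph g Si, tri.src)

/-! ## Decompositions -/

/-- A decomposition tree: vertices labelled by a graph and a token, with the incoming arrows
of every vertex given in index order by a list of subtrees. -/
inductive DTree (V A L : Type*) where
  | node : PreGraph V A L → V → List (DTree V A L) → DTree V A L

def DTree.rootGraph : DTree V A L → PreGraph V A L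
  | .node g _ _ => g

def DTree.rootTok : DTree V A L → V
  | .node _ t _ => t

def DTree.kids : DTree V A L → List (DTree V A L)
  | .node _ _ cs => cs

/-- `IsDecompositionOf Cs D g t` holds iff `D` is a decomposition of the construction
`(g, t)` in `Cs`. -/
inductive IsDecompositionOf (Cs : CSpace V A L) : DTree V A L → PreGraph V A L → V → Prop where
  | single (g : PreGraph V A L) (t : V) (h : IsConstruction Cs g t) :
      IsDecompositionOf Cs (.node g t []) g t
  | split (g : PreGraph V A L) (t : V) (g' : PreGraph V A L)
      (ics : List (PreGraph V A L × V)) (cs : List (DTree V A L))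
      (hc : IsConstruction Cs g t)
      (hsplit : IsSplit Cs g t g' ics)
      (hlen : cs.length = ics.length)
      (hrec : ∀ (i : ℕ) (ci : DTree V A L) (gi : PreGraph V A L) (ti : V),
          cs[i]? = some ci → ics[i]? = some (gi, ti) → IsDecompositionOf Cs ci gi ti) :
      IsDecompositionOf Cs (.node g' t cs) g t

/-- `LcsRel D ls` holds iff `ls` is the leaf construction-sequence of `D`. -/
inductive LcsRel : DTree V A L → List (PreGraph V A L × V) → Prop where
  | leaf (g : PreGraph V A L) (t : V) : LcsRel (.node g t []) [(g, t)]
  | node (g : PreGraph V A L) (t : V) (cs : List (DTree V A L))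
      (ls : List (List (PreGraph V A L × V)))
      (hne : cs ≠ []) (hlen : ls.length = cs.length)
      (h : ∀ (i : ℕ) (ci : DTree V A L) (li : List (PreGraph V A L × V)),
          cs[i]? = some ci → ls[i]? = some li → LcsRel ci li) :
      LcsRel (.node g t cs) ls.flatten

/-- `(p, w)` is one of the constructions labelling a vertex of the decomposition tree. -/
inductive LabelOf : DTree V A L → PreGraph V A L → V → Prop where
  | root (g : PreGraph V A L) (t : V) (cs : List (DTree V A L)) :
      LabelOf (.node g t cs) g t
  | child (g : PreGraph V A L) (t : V) (cs : List (DTree V A L))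
      (c : DTree V A L) (p : PreGraph V A L) (w : V) :
      c ∈ cs → LabelOf c p w → LabelOf (.node g t cs) p w

/-- The union of all the graphs labelling vertices of the decomposition tree
(the graph of the construction `ct(D)` of the decomposition `D`). -/
def DTree.ctGraph (D : DTree V A L) : PreGraph V A L :=
  ⟨{x | ∃ p w, LabelOf D p w ∧ x ∈ p.Tk},
   {x | ∃ p w, LabelOf D p w ∧ x ∈ p.Cf},
   {a | ∃ p w, LabelOf D p w ∧ a ∈ p.Arr},
   {q | ∃ p w, LabelOf D p w ∧ q ∈ p.inc},
   {q | ∃ p w, LabelOf D p w ∧ q ∈ p.ia},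
   {q | ∃ p w, LabelOf D p w ∧ q ∈ p.tl},
   {q | ∃ p w, LabelOf D p w ∧ q ∈ p.cl}⟩

/-- Every vertex label of the decomposition tree satisfies `P`. -/
inductive AllLabels (P : PreGraph V A L → V → Prop) : DTree V A L → Prop where
  | node (g : PreGraph V A L) (t : V) (cs : List (DTree V A L)) :
      P g t → (∀ c, c ∈ cs → AllLabels P c) → AllLabels P (.node g t cs)

/-- The subtree of a decomposition tree at a given position (a path of child indices). -/
def subtreeAt : List ℕ → DTree V A L → Option (DTree V A L)
  | [], D => some D
  | i :: rest, .node _ _ cs =>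
    match cs[i]? with
    | some c => subtreeAt rest c
    | none => none

/-! ## Patterns and embeddings -/

/-- An embedding of the graph `g` into the graph `p`: an isomorphism preserving arrow indices
and configurator labels, with token labels respecting the subtype relation `le`. -/
def IsEmbedding (le : Set (L × L)) (g p : PreGraph V A L) (fv : V → V) (fa : A → A) : Prop :=
  (∀ x ∈ g.Tk, fv x ∈ p.Tk) ∧ (∀ x ∈ g.Cf, fv x ∈ p.Cf) ∧
  (∀ x ∈ g.Tk ∪ g.Cf, ∀ y ∈ g.Tk ∪ g.Cf, fv x = fv y → x = y) ∧
  (∀ y ∈ p.Tk, ∃ x ∈ g.Tk, fv x = y) ∧ (∀ y ∈ p.Cf, ∃ x ∈ g.Cf, fv x = y) ∧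
  (∀ a ∈ g.Arr, fa a ∈ p.Arr) ∧
  (∀ a ∈ g.Arr, ∀ b ∈ g.Arr, fa a = fa b → a = b) ∧
  (∀ b ∈ p.Arr, ∃ a ∈ g.Arr, fa a = b) ∧
  (∀ a v w, (a, (v, w)) ∈ g.inc → (fa a, (fv v, fv w)) ∈ p.inc) ∧
  (∀ a n, (a, n) ∈ g.ia → (fa a, n) ∈ p.ia) ∧
  (∀ u c, (u, c) ∈ g.cl → (fv u, c) ∈ p.cl) ∧
  (∀ x τ, (x, τ) ∈ g.tl → ∃ σ, (fv x, σ) ∈ p.tl ∧ (τ, σ) ∈ le)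

/-- The construction `(g, t)` matches the pattern `(p, v)`. -/
def MatchesPattern (le : Set (L × L)) (g : PreGraph V A L) (t : V)
    (p : PreGraph V A L) (v : V) : Prop :=
  ∃ fv fa, IsEmbedding le g p fv fa ∧ fv t = v

/-- `Ps` is a pattern space for `Cs`: a construction space over the same type system and
constructor specification such that every construction of `Cs` matches some construction
of `Ps`. -/
def IsPatternSpace (Cs Ps : CSpace V A L) : Prop :=
  Ps.Ty = Cs.Ty ∧ Ps.le = Cs.le ∧ Ps.C = Cs.C ∧ Ps.sig = Cs.sig ∧ IsCSpace Ps ∧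
  ∀ g t, IsConstruction Cs g t →
    ∃ p v, IsConstruction Ps p v ∧ MatchesPattern Cs.le g t p v

/-- Vertex-wise matching of two same-shape decomposition trees under a common pair of maps. -/
inductive DMatches (le : Set (L × L)) (fv : V → V) (fa : A → A) :
    DTree V A L → DTree V A L → Prop where
  | node (g : PreGraph V A L) (t : V) (p : PreGraph V A L) (v : V)
      (cs ds : List (DTree V A L))
      (hemb : IsEmbedding le g p fv fa) (ht : fv t = v)
      (hlen : cs.length = ds.length)
      (hrec : ∀ (i : ℕ) (ci di : DTree V A L), cs[i]? = some ci → ds[i]? = some di →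
          DMatches le fv fa ci di) :
      DMatches le fv fa (.node g t cs) (.node p v ds)

/-- The decomposition `D` matches the (pattern) decomposition `Δ`: there is an arrow-index
preserving isomorphism of trees together with an embedding of `ct(D)` into `ct(Δ)` whose
restriction to each vertex label is an embedding into the corresponding pattern label. -/
def DecompositionMatches (le : Set (L × L)) (D Δ : DTree V A L) : Prop :=
  ∃ fv fa, IsEmbedding le D.ctGraph Δ.ctGraph fv fa ∧ fv D.rootTok = Δ.rootTok ∧
    DMatches le fv fa D Δ

/-! ## Descriptions -/

/-- A description: a set of decompositions of patterns (constructions in the pattern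
space `Ps`). -/
def IsDescriptionOf (Ps : CSpace V A L) (Ds : Set (DTree V A L)) : Prop :=
  ∀ Δ ∈ Ds, ∃ p v, IsConstruction Ps p v ∧ IsDecompositionOf Ps Δ p v

/-- The description `Ds` is complete for `Cs`. -/
def CompleteDescription (Cs : CSpace V A L) (Ds : Set (DTree V A L)) : Prop :=
  ∀ g t, IsConstruction Cs g t →
    ∃ Δ ∈ Ds, ∃ D, IsDecompositionOf Cs D g t ∧ DecompositionMatches Cs.le D Δ

/-- The set of patterns labelling vertices of decompositions in `Ds`. -/
def PatternsOf (Ds : Set (DTree V A L)) : Set (PreGraph V A L × V) :=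
  {pv | ∃ Δ ∈ Ds, LabelOf Δ pv.1 pv.2}

/-- Label-preserving isomorphism of patterns/constructions. -/
def LabelIsomorphic (g : PreGraph V A L) (t : V) (p : PreGraph V A L) (v : V) : Prop :=
  ∃ fv fa, IsEmbedding {q : L × L | q.1 = q.2} g p fv fa ∧ fv t = v

/-- The description `Ds` is compact: finitely many patterns up to label-preserving
isomorphism. -/
def CompactDescription (Ds : Set (DTree V A L)) : Prop :=
  ∃ Reps : Set (PreGraph V A L × V), Reps.Finite ∧
    ∀ pv ∈ PatternsOf Ds, ∃ qw ∈ Reps, LabelIsomorphic pv.1 pv.2 qw.1 qw.2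

/-! ## Transformation constraints and structural transformations -/

/-- A transformation-constraint-shaped triple: two patterns (or constructions) together with
a set of patterns (or constructions). -/
structure TConstraint (V A L : Type*) where
  pa : PreGraph V A L
  ca : V
  pb : PreGraph V A L
  cb : V
  Pc : Set (PreGraph V A L × V)

/-- The union of the graphs of a set of patterns. -/
def pGraph (P : Set (PreGraph V A L × V)) : PreGraph V A L :=
  ⟨{x | ∃ pv ∈ P, x ∈ pv.1.Tk}, {x | ∃ pv ∈ P, x ∈ pv.1.Cf},
   {a | ∃ pv ∈ P, a ∈ pv.1.Arr}, {q | ∃ pv ∈ P, q ∈ pv.1.inc},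
   {q | ∃ pv ∈ P, q ∈ pv.1.ia}, {q | ∃ pv ∈ P, q ∈ pv.1.tl},
   {q | ∃ pv ∈ P, q ∈ pv.1.cl}⟩

/-- A respectful embedding of the set of patterns `P` into the set of patterns `P'`. -/
def RespectfulEmbedding (le : Set (L × L)) (P P' : Set (PreGraph V A L × V))
    (fv : V → V) (fa : A → A) : Prop :=
  IsEmbedding le (pGraph P) (pGraph P') fv fa ∧
  ∀ pv ∈ P, ∃ qw ∈ P', IsEmbedding le pv.1 qw.1 fv fa ∧ fv pv.2 = qw.2

/-- Satisfaction of one transformation-constraint-shaped triple by another: embeddings of the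
first two components, a respectful embedding of the third, whose common underlying maps give
an isomorphism of the unions of the graphs. -/
def TCSatisfies (le : Set (L × L)) (s s' : TConstraint V A L) : Prop :=
  ∃ fv fa,
    IsEmbedding le s.pa s'.pa fv fa ∧ fv s.ca = s'.ca ∧
    IsEmbedding le s.pb s'.pb fv fa ∧ fv s.cb = s'.cb ∧
    RespectfulEmbedding le s.Pc s'.Pc fv fa ∧
    IsEmbedding le ((s.pa ∪ s.pb) ∪ pGraph s.Pc) ((s'.pa ∪ s'.pb) ∪ pGraph s'.Pc) fv fa

/-- A transformation constraint for an encoding described by `(Ds, Ds', P'')`. -/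
def IsTransformationConstraint (Ds Ds' : Set (DTree V A L))
    (P'' : Set (PreGraph V A L × V)) (s : TConstraint V A L) : Prop :=
  (s.pa, s.ca) ∈ PatternsOf Ds ∧ (s.pb, s.cb) ∈ PatternsOf Ds' ∧ s.Pc ⊆ P''

/-- A constraint assignment for `Δ` and `Δ'`: a partial function (modelled with `Option`) on
pairs of vertices (paths) whose values are transformation constraints from `S0` matched by the
corresponding labels. -/
def IsConstraintAssignment (leR leR' : Set (L × L)) (S0 : Set (TConstraint V A L))
    (Δ Δ' : DTree V A L) (Lm : List ℕ → List ℕ → Option (TConstraint V A L)) : Prop :=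
  ∀ pi pi' s, Lm pi pi' = some s → s ∈ S0 ∧
    (∃ δ, subtreeAt pi Δ = some δ ∧
        MatchesPattern leR δ.rootGraph δ.rootTok s.pa s.ca) ∧
    (∃ δ', subtreeAt pi' Δ' = some δ' ∧
        MatchesPattern leR' δ'.rootGraph δ'.rootTok s.pb s.cb)

/-- The constraint assignment `Lm` is satisfied by the pair of decompositions `(D, D')`
(whose vertices correspond, via the shape-preserving matchings, to those of `Δ`, `Δ'`). -/
def LSatisfiedBy (leI : Set (L × L)) (Ip : CSpace V A L)
    (Lm : List ℕ → List ℕ → Option (TConstraint V A L)) (D D' : DTree V A L) : Prop :=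
  ∀ pi pi' s d d', Lm pi pi' = some s →
    subtreeAt pi D = some d → subtreeAt pi' D' = some d' →
    ∃ Cset : Set (PreGraph V A L × V),
      (∀ pv ∈ Cset, IsConstruction Ip pv.1 pv.2) ∧
      TCSatisfies leI ⟨d.rootGraph, d.rootTok, d'.rootGraph, d'.rootTok, Cset⟩ s

/-- `(g', t')` is a structural `L`-transformation of `(g, t)` (with respect to the pattern
decompositions `Δ`, `Δ'` for the universal spaces `Ru`, `Ru'` and the inter-property
identification space `Ip`). -/
def IsStructuralLTransformation (Ru Ru' Ip : CSpace V A L) (Δ Δ' : DTree V A L)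
    (Lm : List ℕ → List ℕ → Option (TConstraint V A L))
    (g : PreGraph V A L) (t : V) (g' : PreGraph V A L) (t' : V) : Prop :=
  (∃ D, IsDecompositionOf Ru D g t ∧ DecompositionMatches Ru.le D Δ) ∧
  (∃ D', IsDecompositionOf Ru' D' g' t' ∧ DecompositionMatches Ru'.le D' Δ') ∧
  ∀ D D', IsDecompositionOf Ru D g t → DecompositionMatches Ru.le D Δ →
    IsDecompositionOf Ru' D' g' t' → DecompositionMatches Ru'.le D' Δ' →
    LSatisfiedBy Ip.le Ip Lm D D'

/-- Partial satisfaction: the constraint is only checked at vertices of the pattern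
decomposition `Δh` whose label is already a construction in `Ru'`. -/
def LPartialSatisfiedBy (leI : Set (L × L)) (Ip Ru' : CSpace V A L)
    (Lm : List ℕ → List ℕ → Option (TConstraint V A L)) (D Δh : DTree V A L) : Prop :=
  ∀ pi pi' s d δh, Lm pi pi' = some s →
    subtreeAt pi D = some d → subtreeAt pi' Δh = some δh →
    IsConstructionIn Ru' δh.rootGraph δh.rootTok →
    ∃ Cset : Set (PreGraph V A L × V),
      (∀ pv ∈ Cset, IsConstruction Ip pv.1 pv.2) ∧
      TCSatisfies leI ⟨d.rootGraph, d.rootTok, δh.rootGraph, δh.rootTok, Cset⟩ s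

/-- The pattern `(ph, vh)` (a construction in the pattern space `Ps'` for `Ru'`) is a partial
`L`-transformation of the construction `(g, t)`. -/
def IsPartialLTransformation (Ru Ru' Ip Ps' : CSpace V A L) (Δ Δ' : DTree V A L)
    (Lm : List ℕ → List ℕ → Option (TConstraint V A L))
    (g : PreGraph V A L) (t : V) (ph : PreGraph V A L) (vh : V) : Prop :=
  (∃ D, IsDecompositionOf Ru D g t ∧ DecompositionMatches Ru.le D Δ) ∧
  (∃ Δh, IsDecompositionOf Ps' Δh ph vh ∧ DecompositionMatches Ru'.le Δh Δ') ∧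
  ∀ D Δh, IsDecompositionOf Ru D g t → DecompositionMatches Ru.le D Δ →
    IsDecompositionOf Ps' Δh ph vh → DecompositionMatches Ru'.le Δh Δ' →
    LPartialSatisfiedBy Ip.le Ip Ru' Lm D Δh

/-! ## Validity, soundness, leaf instantiation -/

/-- Validity of `Lm` for `(g, t)` and `(p, v)` at the pair of vertices `(pi, pi')`. -/
def ValidAt (Ru Ru' Ip Ps' : CSpace V A L) (Δ Δ' : DTree V A L)
    (Lm : List ℕ → List ℕ → Option (TConstraint V A L))
    (g : PreGraph V A L) (t : V) (p : PreGraph V A L) (v : V)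
    (pi pi' : List ℕ) : Prop :=
  ∀ D Δh Dsub Δhsub Δsub Δsub',
    IsDecompositionOf Ru D g t → DecompositionMatches Ru.le D Δ →
    IsDecompositionOf Ps' Δh p v → DecompositionMatches Ru'.le Δh Δ' →
    subtreeAt pi D = some Dsub → subtreeAt pi' Δh = some Δhsub →
    subtreeAt pi Δ = some Δsub → subtreeAt pi' Δ' = some Δsub' →
    IsConstructionIn Ru' Δhsub.ctGraph Δhsub.rootTok →
    IsStructuralLTransformation Ru Ru' Ip Δsub Δsub'
      (fun σ σ' => Lm (pi ++ σ) (pi' ++ σ'))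
      Dsub.ctGraph Dsub.rootTok Δhsub.ctGraph Δhsub.rootTok

/-- Ancestor-validity: validity at every pair of proper descendants-in-the-tree
("ancestors" in the paper's in-tree terminology). -/
def AncestorValidAt (Ru Ru' Ip Ps' : CSpace V A L) (Δ Δ' : DTree V A L)
    (Lm : List ℕ → List ℕ → Option (TConstraint V A L))
    (g : PreGraph V A L) (t : V) (p : PreGraph V A L) (v : V)
    (pi pi' : List ℕ) : Prop :=
  ∀ σ σ' : List ℕ, σ ≠ [] → σ' ≠ [] →
    (∃ d, subtreeAt (pi ++ σ) Δ = some d) → (∃ d', subtreeAt (pi' ++ σ') Δ' = some d') →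
    ValidAt Ru Ru' Ip Ps' Δ Δ' Lm g t p v (pi ++ σ) (pi' ++ σ')

/-- Soundness of a constraint assignment. -/
def SoundAssignment (Ru Ru' Ip Ps' : CSpace V A L) (Δ Δ' : DTree V A L)
    (Lm : List ℕ → List ℕ → Option (TConstraint V A L)) : Prop :=
  ∀ g t, IsConstructionIn Ru g t →
    (∃ D, IsDecompositionOf Ru D g t ∧ DecompositionMatches Ru.le D Δ) →
    ∀ p v, IsConstruction Ps' p v →
      (∃ Δh, IsDecompositionOf Ps' Δh p v ∧ DecompositionMatches Ru'.le Δh Δ') →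
      ∀ pi pi', (∃ d, subtreeAt pi Δ = some d) → (∃ d', subtreeAt pi' Δ' = some d') →
        AncestorValidAt Ru Ru' Ip Ps' Δ Δ' Lm g t p v pi pi' →
        ValidAt Ru Ru' Ip Ps' Δ Δ' Lm g t p v pi pi'

/-- The pattern `(p, v)` leaf-instantiates `Δ'`: it matches `Δ'` and every leaf of its
`Δ'`-canonical decomposition is labelled by a construction in `Ru'`. -/
def LeafInstantiates (Ru' Ps' : CSpace V A L) (Δ' : DTree V A L)
    (p : PreGraph V A L) (v : V) : Prop :=
  (∃ Δh, IsDecompositionOf Ps' Δh p v ∧ DecompositionMatches Ru'.le Δh Δ') ∧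
  ∀ Δh, IsDecompositionOf Ps' Δh p v → DecompositionMatches Ru'.le Δh Δ' →
    ∀ pi δh, subtreeAt pi Δh = some δh → δh.kids = [] →
      IsConstructionIn Ru' δh.rootGraph δh.rootTok

/-- A complete extension of a pattern `(p, v)` that leaf-instantiates `Δ'`. -/
def CompleteExtension (Ru' Ps' : CSpace V A L) (Δ' : DTree V A L)
    (p : PreGraph V A L) (v : V) (g' : PreGraph V A L) (t' : V) : Prop :=
  IsConstructionIn Ru' g' t' ∧
  ∃ fv fa, IsEmbedding Ru'.le g' p fv fa ∧ fv t' = v ∧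
    ∀ Δh, IsDecompositionOf Ps' Δh p v → DecompositionMatches Ru'.le Δh Δ' →
      ∀ pi δh, subtreeAt pi Δh = some δh → δh.kids = [] →
        ∀ x ∈ δh.rootGraph.Tk, x ∈ g'.Tk ∧ fv x = x

/-- `(g, t)` and `(p, v)` are valid at the leaves of `Δ` and `Δ'`. -/
def ValidAtLeaves (Ru Ru' Ip Ps' : CSpace V A L) (Δ Δ' : DTree V A L)
    (Lm : List ℕ → List ℕ → Option (TConstraint V A L))
    (g : PreGraph V A L) (t : V) (p : PreGraph V A L) (v : V) : Prop :=
  ∀ pi pi' δ δ', subtreeAt pi Δ = some δ → subtreeAt pi' Δ' = some δ' →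
    δ.kids = [] → δ'.kids = [] →
    ValidAt Ru Ru' Ip Ps' Δ Δ' Lm g t p v pi pi'



/-! ## Auxiliary lemmas for Statement 10 -/

section Aux

variable {V A L : Type*}

lemma chain_append {g : PreGraph V A L} :
    ∀ {l₁ l₂ : List A} {s v : V}, ChainIn g (l₁ ++ l₂) s v ↔
      ∃ m, ChainIn g l₁ s m ∧ ChainIn g l₂ m v := by
  intro l₁
  induction l₁ with
  | nil =>
      intro l₂ s v
      constructor
      · intro h; exact ⟨s, rfl, h⟩
      · rintro ⟨m, hm, h⟩
        have : s = m := hm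
        subst this; exact h
  | cons a rest ih =>
      intro l₂ s v
      simp only [List.cons_append, ChainIn]
      constructor
      · rintro ⟨ha, m, hinc, hch⟩
        rcases ih.1 hch with ⟨m', h1, h2⟩
        exact ⟨m', ⟨ha, m, hinc, h1⟩, h2⟩
      · rintro ⟨m', ⟨ha, m, hinc, h1⟩, h2⟩
        exact ⟨ha, m, hinc, ih.2 ⟨m', h1, h2⟩⟩

lemma mem_zipWith_of_getElem? {α β γ : Type*} {f : α → β → γ}
    {as : List α} {bs : List β} {i : ℕ} {a : α} {b : β}
    (ha : as[i]? = some a) (hb : bs[i]? = some b) :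
    f a b ∈ List.zipWith f as bs := by
  induction as generalizing bs i with
  | nil => simp at ha
  | cons x xs ih =>
      cases bs with
      | nil => simp at hb
      | cons y ys =>
          cases i with
          | zero =>
              simp at ha hb
              subst ha; subst hb
              exact List.mem_cons_self
          | succ n =>
              simp only [List.getElem?_cons_succ] at ha hb
              exact List.mem_cons_of_mem _ (ih ha hb)

lemma splitMax (P : A → Prop) (l : List A) :
    ∃ l₃ l₄ : List A, l = l₃ ++ l₄ ∧ (∀ b ∈ l₄, P b) ∧
      (l₃ = [] ∨ ∃ l₃' z, l₃ = l₃' ++ [z] ∧ ¬ P z) := by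
  induction l using List.reverseRecOn with
  | nil => exact ⟨[], [], rfl, by simp, Or.inl rfl⟩
  | append_singleton l y ih =>
      by_cases hy : P y
      · rcases ih with ⟨l₃, l₄, rfl, h₄, h₃⟩
        exact ⟨l₃, l₄ ++ [y], by simp, by
          intro b hb
          rcases List.mem_append.1 hb with hb | hb
          · exact h₄ b hb
          · simp at hb; subst hb; exact hy, h₃⟩
      · exact ⟨l ++ [y], [], by simp, by simp, Or.inr ⟨l, y, rfl, hy⟩⟩


lemma not_tk_cf {g : PreGraph V A L} (hg : IsGraph g) {x : V}
    (h1 : x ∈ g.Tk) (h2 : x ∈ g.Cf) : False :=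
  Set.disjoint_left.mp hg.1 h1 h2

lemma inc_arr {g : PreGraph V A L} (hg : IsGraph g) {a : A} {p : V × V}
    (hp : (a, p) ∈ g.inc) : a ∈ g.Arr :=
  hg.2.1.1 _ hp

lemma inc_unique {g : PreGraph V A L} (hg : IsGraph g) {a : A} {p q : V × V}
    (hp : (a, p) ∈ g.inc) (hq : (a, q) ∈ g.inc) : p = q := by
  obtain ⟨y, _, hy⟩ := hg.2.1.2 a (inc_arr hg hp)
  rw [hy _ hp, hy _ hq]

lemma src_cf_of_tgt_tk {g : PreGraph V A L} (hg : IsGraph g) {a : A} {v w : V}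
    (hinc : (a, (v, w)) ∈ g.inc) (hw : w ∈ g.Tk) : v ∈ g.Cf := by
  rcases hg.2.2.1 a v w hinc with ⟨_, hw'⟩ | ⟨hv, _⟩
  · exact (not_tk_cf hg hw hw').elim
  · exact hv

lemma src_tk_of_tgt_cf {g : PreGraph V A L} (hg : IsGraph g) {a : A} {v w : V}
    (hinc : (a, (v, w)) ∈ g.inc) (hw : w ∈ g.Cf) : v ∈ g.Tk := by
  rcases hg.2.2.1 a v w hinc with ⟨hv, _⟩ | ⟨_, hw'⟩
  · exact hv
  · exact (not_tk_cf hg hw' hw).elim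

/-- Facts about a configurator extracted from the structure-graph property:
an input-arrow sequence (in `g`) with prescribed length and a unique output arrow. -/
lemma cfg_facts {Ty : Set L} {le : Set (L × L)} {C : Set L} {sig : Set (L × (List L × L))}
    {g : PreGraph V A L} (hs : IsStructureGraph Ty le C sig g) {u : V} (hu : u ∈ g.Cf) :
    ∃ c ins out, (u, c) ∈ g.cl ∧ (c, (ins, out)) ∈ sig ∧
      (∃ ars, InArrowSeq g u ars ∧ ars.length = ins.length) ∧
      (∃! a0 : A, a0 ∈ g.Arr ∧ ∃ w, (a0, (u, w)) ∈ g.inc) := by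
  obtain ⟨c, ins, out, hcl, _, hsig, hconf⟩ := hs.2.2 u hu
  obtain ⟨hgr, hcf, hcl', htk, hout, houtp, ars, hars, hlen, hins⟩ := hconf
  refine ⟨c, ins, out, hcl, hsig, ⟨ars, ?_, hlen⟩, ?_⟩
  · -- transfer InArrowSeq from the neighbourhood to g
    obtain ⟨hnd, hmem, hidx⟩ := hars
    refine ⟨hnd, ?_, ?_⟩
    · intro a
      rw [hmem a]
      constructor
      · rintro ⟨⟨ha, _⟩, w, hw, _⟩
        exact ⟨ha, w, hw⟩
      · rintro ⟨ha, w, hw⟩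
        have hia : a ∈ g.incidentArrows u := ⟨ha, w, Or.inl hw⟩
        exact ⟨⟨ha, hia⟩, w, ⟨hw, hia⟩⟩
    · intro i a hi
      exact (hidx i a hi).1
  · obtain ⟨a0, ⟨ha0, w, hw⟩, huniq⟩ := hout
    refine ⟨a0, ⟨ha0.1, w, hw.1⟩, ?_⟩
    intro b ⟨hb, w', hw'⟩
    have hib : b ∈ g.incidentArrows u := ⟨hb, w', Or.inr hw'⟩
    exact huniq b ⟨⟨hb, hib⟩, w', ⟨hw', hib⟩⟩


lemma mem_tes_block {a : A} {v : V} {ars : List A} {Ss : List (List (Trail V A))}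
    {i : ℕ} {x : A} {Si : List (Trail V A)} {e : Trail V A}
    (hi : ars[i]? = some x) (hSi : Ss[i]? = some Si) (he : e ∈ Si) :
    (⟨e.arrows ++ [x, a], e.src, v⟩ : Trail V A) ∈
      List.flatten (List.zipWith
        (fun (ai : A) (Si : List (Trail V A)) =>
          Si.map (fun e => (⟨e.arrows ++ [ai, a], e.src, v⟩ : Trail V A))) ars Ss) :=
  List.mem_flatten.2 ⟨_, mem_zipWith_of_getElem? hi hSi, List.mem_map_of_mem he⟩

lemma tes_ne {g : PreGraph V A L} (hg : IsGraph g)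
    (hcfg : ∀ u ∈ g.Cf, ∃ ars1, InArrowSeq g u ars1 ∧ ars1 ≠ [])
    {tr : Trail V A} {S : List (Trail V A)} (h : TES g tr S) :
    tr.src ∈ g.Tk → S ≠ [] := by
  induction h with
  | nonext tr h => intro _; simp
  | ext tr a u ars Ss hext hinc hars hlen hrec ih =>
      intro hsrc
      have hu : u ∈ g.Cf := src_cf_of_tgt_tk hg hinc hsrc
      obtain ⟨ars1, hars1, hne1⟩ := hcfg u hu
      obtain ⟨a0, ha0⟩ := List.exists_mem_of_ne_nil ars1 hne1
      have ha0' : a0 ∈ ars := (hars.2.1 a0).2 ((hars1.2.1 a0).1 ha0)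
      obtain ⟨i, hi⟩ := List.mem_iff_getElem?.1 ha0'
      have hilen : i < ars.length := by
        rcases List.getElem?_eq_some_iff.1 hi with ⟨h', _⟩; exact h'
      have hSieq : Ss[i]? = some (Ss[i]'(hlen ▸ hilen)) :=
        List.getElem?_eq_getElem _
      obtain ⟨ha0Arr, w, hw⟩ := (hars.2.1 a0).1 ha0'
      have hwtk : w ∈ g.Tk := src_tk_of_tgt_cf hg hw hu
      have hSine : Ss[i]'(hlen ▸ hilen) ≠ [] := ih i a0 w _ hi hSieq hw hwtk
      obtain ⟨e, he⟩ := List.exists_mem_of_ne_nil _ hSine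
      exact List.ne_nil_of_mem (mem_tes_block hi hSieq he)


lemma exists_of_mem_zipWith {α β γ : Type*} {f : α → β → γ} {as : List α} {bs : List β}
    {c : γ} (h : c ∈ List.zipWith f as bs) :
    ∃ (i : ℕ) (a : α) (b : β), as[i]? = some a ∧ bs[i]? = some b ∧ c = f a b := by
  induction as generalizing bs with
  | nil => simp at h
  | cons x xs ih =>
      cases bs with
      | nil => simp at h
      | cons y ys =>
          simp only [List.zipWith_cons_cons, List.mem_cons] at h
          rcases h with h | h
          · exact ⟨0, x, y, by simp, by simp, h⟩
          · obtain ⟨i, a, b, ha, hb, hc⟩ := ih h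
            exact ⟨i + 1, a, b, by simpa using ha, by simpa using hb, hc⟩

lemma tes_nodup {g : PreGraph V A L} (hg : IsGraph g)
    (huout : ∀ u ∈ g.Cf, ∀ a ∈ g.Arr, ∀ b ∈ g.Arr,
      (∃ w, (a, (u, w)) ∈ g.inc) → (∃ w, (b, (u, w)) ∈ g.inc) → a = b)
    {tr : Trail V A} {S : List (Trail V A)} (h : TES g tr S) :
    tr.src ∈ g.Tk → tr.tgt ∈ g.Tk → tr.arrows.Nodup →
    ChainIn g tr.arrows tr.src tr.tgt →
    ∀ e ∈ S, (e.arrows ++ tr.arrows).Nodup ∧ ∀ b ∈ e.arrows, b ∈ g.Arr := by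
  induction h with
  | nonext tr h =>
      intro _ _ hnd _ e he
      simp only [List.mem_singleton] at he
      subst he
      exact ⟨hnd, by simp⟩
  | ext tr a u ars Ss hext hinc hars hlen hrec ih =>
      intro hsrc htgt hnd hch e he
      obtain ⟨block, hblock, heblock⟩ := List.mem_flatten.1 he
      obtain ⟨i, x, Si, hi, hSi, rfl⟩ := exists_of_mem_zipWith hblock
      obtain ⟨e0, he0, rfl⟩ := List.mem_map.1 heblock
      have hu : u ∈ g.Cf := src_cf_of_tgt_tk hg hinc hsrc
      have hx : x ∈ ars := by
        rcases List.getElem?_eq_some_iff.1 hi with ⟨h', he'⟩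
        exact he' ▸ List.getElem_mem h'
      obtain ⟨hxArr, si, hxinc⟩ := (hars.2.1 x).1 hx
      have hsi : si ∈ g.Tk := src_tk_of_tgt_cf hg hxinc hu
      have hanotr : a ∉ tr.arrows := hext.2.1
      have hxa : x ≠ a := by
        intro hxa; subst hxa
        have := inc_unique hg hxinc hinc
        have hsu : si = u := congrArg Prod.fst this
        exact not_tk_cf hg (hsu ▸ hsi) hu
      have hxnotr : x ∉ tr.arrows := by
        intro hxin
        obtain ⟨p, q, hpq⟩ := List.append_of_mem hxin
        have hch' := hpq ▸ hch
        obtain ⟨m, hp, hq⟩ := chain_append.1 hch'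
        obtain ⟨_, m', hxinc', hq'⟩ := hq
        have : (m, m') = (si, u) := inc_unique hg hxinc' hxinc
        have hm' : m' = u := congrArg Prod.snd this
        cases q with
        | nil =>
            have hut : u = tr.tgt := hm' ▸ (hq' : m' = tr.tgt)
            exact not_tk_cf hg (hut ▸ htgt) hu
        | cons b q' =>
            obtain ⟨hbArr, mb, hbinc, _⟩ := hq'
            rw [hm'] at hbinc
            have hab : a = b :=
              huout u hu a hext.1 b hbArr ⟨tr.src, hinc⟩ ⟨mb, hbinc⟩
            apply hanotr
            rw [hpq, hab]
            simp
      have hndchild : (x :: a :: tr.arrows).Nodup := by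
        refine List.nodup_cons.2 ⟨?_, List.nodup_cons.2 ⟨hanotr, hnd⟩⟩
        simp only [List.mem_cons]
        rintro (h | h)
        · exact hxa h
        · exact hxnotr h
      have hchchild : ChainIn g (x :: a :: tr.arrows) si tr.tgt :=
        ⟨hxArr, u, hxinc, hext.1, tr.src, hinc, hch⟩
      have := ih i x si Si hi hSi hxinc hsi htgt hndchild hchchild e0 he0
      refine ⟨?_, ?_⟩
      · simpa using this.1
      · intro b hb
        simp only [List.mem_append, List.mem_cons] at hb
        rcases hb with hb | hb | hb
        · exact this.2 b hb
        · exact hb ▸ hxArr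
        · rcases hb with hb | hb
          · exact hb ▸ hext.1
          · simp at hb


lemma eq_nil_or_append {α : Type*} (l : List α) : l = [] ∨ ∃ l0 y, l = l0 ++ [y] := by
  rcases List.eq_nil_or_concat l with h | ⟨l0, y, h⟩
  · exact Or.inl h
  · exact Or.inr ⟨l0, y, by simpa [List.concat_eq_append] using h⟩

lemma tes_covers_arrows {g : PreGraph V A L} (hg : IsGraph g) (hus : UniStructured g)
    (hcfg : ∀ u ∈ g.Cf, ∃ ars1, InArrowSeq g u ars1 ∧ ars1 ≠ [])
    {tr : Trail V A} {S : List (Trail V A)} (h : TES g tr S) :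
    tr.src ∈ g.Tk →
    ∀ (l : List A) (s : V), l ≠ [] → ChainIn g l s tr.src → (l ++ tr.arrows).Nodup →
      ∀ b ∈ l, b ∈ trailArrowSet S := by
  induction h with
  | nonext tr hne =>
      intro hsrc l s hl hch hnd b hb
      exfalso
      rcases eq_nil_or_append l with rfl | ⟨l0, y, rfl⟩
      · exact hl rfl
      obtain ⟨m0, hch0, hyArr, m2, hyinc, hm2⟩ := chain_append.1 hch
      have hm2' : m2 = tr.src := hm2
      subst hm2'
      have hynotr : y ∉ tr.arrows := by
        have hdisj := List.disjoint_of_nodup_append hnd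
        exact fun hin => hdisj (by simp) hin
      exact hne ⟨y, hyArr, hynotr, m0, hyinc⟩
  | ext tr a u ars Ss hext hinc hars hlen hrec ih =>
      intro hsrc l s hl hch hnd b hb
      rcases eq_nil_or_append l with rfl | ⟨l0, y, rfl⟩
      · exact absurd rfl hl
      obtain ⟨m0, hch0, hyArr, m2, hyinc, hm2⟩ := chain_append.1 hch
      have hm2' : m2 = tr.src := hm2
      subst hm2'
      have hya : y = a :=
        hus tr.src hsrc y hyArr a hext.1 ⟨m0, hyinc⟩ ⟨u, hinc⟩
      subst hya
      have hm0 : m0 = u := congrArg Prod.fst (inc_unique hg hyinc hinc)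
      rw [hm0] at hch0
      have hu : u ∈ g.Cf := src_cf_of_tgt_tk hg hinc hsrc
      rcases eq_nil_or_append l0 with rfl | ⟨l1, x, rfl⟩
      · -- l = [y], need y ∈ trailArrowSet S
        simp only [List.nil_append, List.mem_singleton] at hb
        subst hb
        obtain ⟨ars1, hars1, hne1⟩ := hcfg u hu
        obtain ⟨a0, ha0⟩ := List.exists_mem_of_ne_nil ars1 hne1
        have ha0' : a0 ∈ ars := (hars.2.1 a0).2 ((hars1.2.1 a0).1 ha0)
        obtain ⟨i, hi⟩ := List.mem_iff_getElem?.1 ha0'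
        have hilen : i < ars.length := by
          rcases List.getElem?_eq_some_iff.1 hi with ⟨h', _⟩; exact h'
        have hSieq : Ss[i]? = some (Ss[i]'(hlen ▸ hilen)) := List.getElem?_eq_getElem _
        obtain ⟨ha0Arr, si, hsiinc⟩ := (hars.2.1 a0).1 ha0'
        have hsitk : si ∈ g.Tk := src_tk_of_tgt_cf hg hsiinc hu
        have hchild := hrec i a0 si _ hi hSieq hsiinc
        have hSine := tes_ne hg hcfg hchild hsitk
        obtain ⟨e, he⟩ := List.exists_mem_of_ne_nil _ hSine
        exact ⟨_, mem_tes_block hi hSieq he, by simp⟩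
      · -- l = l1 ++ [x] ++ [a]
        obtain ⟨m1, hch1, hxArr, mu, hxinc, hmu⟩ := chain_append.1 hch0
        have hmu' : mu = u := hmu
        subst hmu'
        have hx : x ∈ ars := (hars.2.1 x).2 ⟨hxArr, m1, hxinc⟩
        obtain ⟨i, hi⟩ := List.mem_iff_getElem?.1 hx
        have hilen : i < ars.length := by
          rcases List.getElem?_eq_some_iff.1 hi with ⟨h', _⟩; exact h'
        have hSieq : Ss[i]? = some (Ss[i]'(hlen ▸ hilen)) := List.getElem?_eq_getElem _
        have hm1tk : m1 ∈ g.Tk := src_tk_of_tgt_cf hg hxinc hu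
        have hchild := hrec i x m1 _ hi hSieq hxinc
        have hSine := tes_ne hg hcfg hchild hm1tk
        obtain ⟨e, he⟩ := List.exists_mem_of_ne_nil _ hSine
        simp only [List.mem_append, List.mem_singleton] at hb
        rcases hb with (hb | hb) | hb
        · -- b ∈ l1 : use the inductive hypothesis
          have hl1ne : l1 ≠ [] := List.ne_nil_of_mem hb
          have hnd1 : (l1 ++ (x :: y :: tr.arrows)).Nodup := by
            have heq : ((l1 ++ [x]) ++ [y]) ++ tr.arrows = l1 ++ (x :: y :: tr.arrows) := by
              simp
            rw [← heq]; exact hnd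
          have hcov := ih i x m1 _ hi hSieq hxinc hm1tk l1 s hl1ne hch1 hnd1 b hb
          obtain ⟨e0, he0, hbe0⟩ := hcov
          exact ⟨_, mem_tes_block hi hSieq he0, by simp [hbe0]⟩
        · exact hb ▸ ⟨_, mem_tes_block hi hSieq he, by simp⟩
        · exact hb ▸ ⟨_, mem_tes_block hi hSieq he, by simp⟩

lemma tes_source {g : PreGraph V A L} (hg : IsGraph g) (hus : UniStructured g)
    {tr : Trail V A} {S : List (Trail V A)} (h : TES g tr S) :
    tr.src ∈ g.Tk →
    ∀ (l : List A) (s : V), ChainIn g l s tr.src → (l ++ tr.arrows).Nodup → s ∈ g.Tk →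
      (∀ b ∈ g.Arr, ∀ w, (b, (w, s)) ∈ g.inc → False) →
      ∃ e ∈ S, e.src = s := by
  induction h with
  | nonext tr hne =>
      intro hsrc l s hch hnd hstk hnoin
      rcases eq_nil_or_append l with rfl | ⟨l0, y, rfl⟩
      · have hs : s = tr.src := hch
        exact ⟨⟨[], tr.src, tr.src⟩, by simp, hs.symm⟩
      · exfalso
        obtain ⟨m0, hch0, hyArr, m2, hyinc, hm2⟩ := chain_append.1 hch
        have hm2' : m2 = tr.src := hm2
        subst hm2'
        have hynotr : y ∉ tr.arrows := by
          have hdisj := List.disjoint_of_nodup_append hnd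
          exact fun hin => hdisj (by simp) hin
        exact hne ⟨y, hyArr, hynotr, m0, hyinc⟩
  | ext tr a u ars Ss hext hinc hars hlen hrec ih =>
      intro hsrc l s hch hnd hstk hnoin
      rcases eq_nil_or_append l with rfl | ⟨l0, y, rfl⟩
      · have hs : s = tr.src := hch
        exact absurd (hs ▸ hinc) (fun h' => hnoin a hext.1 u h')
      obtain ⟨m0, hch0, hyArr, m2, hyinc, hm2⟩ := chain_append.1 hch
      have hm2' : m2 = tr.src := hm2
      subst hm2'
      have hya : y = a :=
        hus tr.src hsrc y hyArr a hext.1 ⟨m0, hyinc⟩ ⟨u, hinc⟩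
      subst hya
      have hm0 : m0 = u := congrArg Prod.fst (inc_unique hg hyinc hinc)
      rw [hm0] at hch0
      have hu : u ∈ g.Cf := src_cf_of_tgt_tk hg hinc hsrc
      rcases eq_nil_or_append l0 with rfl | ⟨l1, x, rfl⟩
      · exfalso
        have hs : s = u := hch0
        exact not_tk_cf hg hstk (hs ▸ hu)
      · obtain ⟨m1, hch1, hxArr, mu, hxinc, hmu⟩ := chain_append.1 hch0
        have hmu' : mu = u := hmu
        subst hmu'
        have hx : x ∈ ars := (hars.2.1 x).2 ⟨hxArr, m1, hxinc⟩
        obtain ⟨i, hi⟩ := List.mem_iff_getElem?.1 hx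
        have hilen : i < ars.length := by
          rcases List.getElem?_eq_some_iff.1 hi with ⟨h', _⟩; exact h'
        have hSieq : Ss[i]? = some (Ss[i]'(hlen ▸ hilen)) := List.getElem?_eq_getElem _
        have hm1tk : m1 ∈ g.Tk := src_tk_of_tgt_cf hg hxinc hu
        have hnd1 : (l1 ++ (x :: y :: tr.arrows)).Nodup := by
          have heq : ((l1 ++ [x]) ++ [y]) ++ tr.arrows = l1 ++ (x :: y :: tr.arrows) := by
            simp
          rw [← heq]; exact hnd
        obtain ⟨e0, he0, hsrc0⟩ :=
          ih i x m1 _ hi hSieq hxinc hm1tk l1 s hch1 hnd1 hstk hnoin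
        exact ⟨_, mem_tes_block hi hSieq he0, hsrc0⟩


lemma mem_of_function_sub {α β : Type*} {R R' : Set (α × β)} {D D' : Set α}
    (hR : IsFunctionOn R D) (hR' : IsFunctionOn R' D') (hsub : R' ⊆ R)
    {q : α × β} (hq : q ∈ R) (hq1 : q.1 ∈ D') : q ∈ R' := by
  obtain ⟨q1, q2⟩ := q
  obtain ⟨y, hy, _⟩ := hR'.2 q1 hq1
  obtain ⟨y', hy', hu'⟩ := hR.2 q1 (hR.1 _ hq)
  have h1 : q2 = y' := hu' q2 hq
  have h2 : y = y' := hu' y (hsub hy)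
  rw [h1, ← h2]
  exact hy

lemma foldl_union_mem {α : Type*} (f : PreGraph V A L → Set α)
    (hf : ∀ a b : PreGraph V A L, f (a ∪ b) = f a ∪ f b) :
    ∀ (Lst : List (PreGraph V A L)) (h : PreGraph V A L) (x : α),
      x ∈ f (Lst.foldl (· ∪ ·) h) ↔ x ∈ f h ∨ ∃ p ∈ Lst, x ∈ f p := by
  intro Lst
  induction Lst with
  | nil => simp
  | cons p ps ih =>
      intro h x
      rw [List.foldl_cons, ih, hf]
      simp only [Set.mem_union, List.mem_cons]
      constructor
      · rintro ((h1 | h1) | ⟨q, hq, h1⟩)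
        · exact Or.inl h1
        · exact Or.inr ⟨p, Or.inl rfl, h1⟩
        · exact Or.inr ⟨q, Or.inr hq, h1⟩
      · rintro (h1 | ⟨q, (rfl | hq), h1⟩)
        · exact Or.inl (Or.inl h1)
        · exact Or.inl (Or.inr h1)
        · exact Or.inr ⟨q, hq, h1⟩

lemma PreGraph.ext_aux {p q : PreGraph V A L} (h1 : p.Tk = q.Tk) (h2 : p.Cf = q.Cf)
    (h3 : p.Arr = q.Arr) (h4 : p.inc = q.inc) (h5 : p.ia = q.ia) (h6 : p.tl = q.tl)
    (h7 : p.cl = q.cl) : p = q := by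
  cases p; cases q
  simp_all

lemma mem_of_getElem?' {α : Type*} {l : List α} {i : ℕ} {x : α} (h : l[i]? = some x) :
    x ∈ l := by
  rcases List.getElem?_eq_some_iff.1 h with ⟨h', rfl⟩
  exact List.getElem_mem h'

end Aux

/-- the generator's graph together with all induced construction graphs of a
split cover the whole construction graph. -/
theorem split_covers_construction {V A L : Type*}
    (Cs : CSpace V A L) (hCs : IsCSpace Cs)
    (g : PreGraph V A L) (t : V) (hc : IsConstruction Cs g t)
    (g' : PreGraph V A L) (hc' : IsConstruction Cs g' t) (hsub : g'.Subgraph g)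
    (trs : List (Trail V A)) (hgen : TES g' (Trail.nil t) trs)
    (Ss : List (List (Trail V A))) (hSlen : Ss.length = trs.length)
    (hTES : ∀ (i : ℕ) (tri : Trail V A) (Si : List (Trail V A)),
        trs[i]? = some tri → Ss[i]? = some Si → TES g tri Si) :
    g = (Ss.map (trGraph g)).foldl (· ∪ ·) g' := by
  obtain ⟨hgsub, hgsg, _, _, _, hgus, htg, hgtr⟩ := hc
  obtain ⟨hg'sub, hg'sg, _, _, _, hg'us, htg', hg'tr⟩ := hc'
  have hgg : IsGraph g := hgsg.1
  have hgg' : IsGraph g' := hg'sg.1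
  have hsigfun : IsFunctionOn Cs.sig Cs.C := hCs.2.2.1
  have hsigne : ∀ c ins out, (c, (ins, out)) ∈ Cs.sig → ins ≠ [] :=
    fun c ins out h => (hCs.2.2.2.1 c ins out h).1
  have hcfg_g : ∀ u ∈ g.Cf, ∃ ars1, InArrowSeq g u ars1 ∧ ars1 ≠ [] := by
    intro u hu
    obtain ⟨c, ins, out, _, hsig, ⟨ars, hars, hlen⟩, _⟩ := cfg_facts hgsg hu
    refine ⟨ars, hars, fun h => hsigne c ins out hsig ?_⟩
    rw [h] at hlen
    exact List.length_eq_zero_iff.1 hlen.symm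
  have huout_g' : ∀ u ∈ g'.Cf, ∀ a ∈ g'.Arr, ∀ b ∈ g'.Arr,
      (∃ w, (a, (u, w)) ∈ g'.inc) → (∃ w, (b, (u, w)) ∈ g'.inc) → a = b := by
    intro u hu a ha b hb hwa hwb
    obtain ⟨c, ins, out, _, _, _, a0, _, huniq⟩ := cfg_facts hg'sg hu
    rw [huniq a ⟨ha, hwa⟩, huniq b ⟨hb, hwb⟩]
  -- entry analysis: a vertex of g' with an incoming g-arrow outside g' is a token of g'
  -- without any incoming arrows in g'
  have hentry : ∀ m, m ∈ g'.Tk ∪ g'.Cf →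
      (∃ y, y ∈ g.Arr ∧ (∃ w, (y, (w, m)) ∈ g.inc) ∧ y ∉ g'.Arr) →
      m ∈ g'.Tk ∧ ∀ b ∈ g'.Arr, ∀ w, (b, (w, m)) ∈ g'.inc → False := by
    rintro m hm ⟨y, hyArr, ⟨w0, hyinc⟩, hyg'⟩
    have hmtk : m ∈ g'.Tk := by
      rcases hm with hm | hm
      · exact hm
      · exfalso
        have hmCf : m ∈ g.Cf := hsub.2.1 hm
        obtain ⟨c, ins, out, hclg, hsigg, ⟨arsg, harsg, hlg⟩, _⟩ := cfg_facts hgsg hmCf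
        obtain ⟨c', ins', out', hclg', hsigg', ⟨arsg', harsg', hlg'⟩, _⟩ :=
          cfg_facts hg'sg hm
        have hcc : c' = c := by
          obtain ⟨yy, _, hu⟩ := hgg.2.2.2.2.2.2 m hmCf
          rw [hu c' (hsub.2.2.2.2.2.2 hclg'), hu c hclg]
        subst hcc
        have hinseq : ins' = ins := by
          obtain ⟨v, _, hu⟩ := hsigfun.2 c' (hsigfun.1 _ hsigg)
          have h1 := hu (ins, out) hsigg
          have h2 := hu (ins', out') hsigg'
          have := h1.trans h2.symm
          exact (congrArg Prod.fst this).symm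
        have hsubset : arsg' ⊆ arsg := by
          intro b hb
          obtain ⟨hbArr, w, hbinc⟩ := (harsg'.2.1 b).1 hb
          exact (harsg.2.1 b).2 ⟨hsub.2.2.1 hbArr, w, hsub.2.2.2.1 hbinc⟩
        have hlenle : arsg.length ≤ arsg'.length := by
          rw [hlg, hlg', hinseq]
        have hperm : List.Perm arsg' arsg :=
          (List.subperm_of_subset harsg'.1 hsubset).perm_of_length_le hlenle
        have hymem : y ∈ arsg := (harsg.2.1 y).2 ⟨hyArr, w0, hyinc⟩
        exact hyg' ((harsg'.2.1 y).1 (hperm.mem_iff.2 hymem)).1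
    refine ⟨hmtk, fun b hb w hbinc => ?_⟩
    have hby : b = y := hgus m (hsub.1 hmtk) b (hsub.2.2.1 hb) y hyArr
      ⟨w, hsub.2.2.2.1 hbinc⟩ ⟨w0, hyinc⟩
    exact hyg' (hby ▸ hb)
  have htnil_src : (Trail.nil (V := V) (A := A) t).src ∈ g'.Tk := htg'
  have htnil_tgt : (Trail.nil (V := V) (A := A) t).tgt ∈ g'.Tk := htg'
  -- main coverage of arrows on nodup chains ending in g'
  have C2 : ∀ (n : ℕ) (l : List A) (s m : V), l.length ≤ n → ChainIn g l s m →
      l.Nodup → m ∈ g'.Tk ∪ g'.Cf →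
      ∀ b ∈ l, b ∈ g'.Arr ∨ ∃ Si ∈ Ss, b ∈ trailArrowSet Si := by
    intro n
    induction n with
    | zero =>
        intro l s m hlen hch hnd hm b hb
        have : l = [] := List.length_eq_zero_iff.1 (Nat.le_zero.1 hlen)
        subst this
        simp at hb
    | succ n ih =>
        intro l s m hlen hch hnd hm b hb
        rcases eq_nil_or_append l with rfl | ⟨l0, y, rfl⟩
        · simp at hb
        obtain ⟨m0, hch0, hyArr, m2, hyinc, hm2⟩ := chain_append.1 hch
        have hm2' : m2 = m := hm2
        rw [hm2'] at hyinc
        by_cases hyg' : y ∈ g'.Arr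
        · -- strip the last arrow, which is in g'
          obtain ⟨pr, hpr, _⟩ := hgg'.2.1.2 y hyg'
          have hpr' : pr = (m0, m) := inc_unique hgg (hsub.2.2.2.1 hpr) hyinc
          subst hpr'
          have hm0 : m0 ∈ g'.Tk ∪ g'.Cf := by
            rcases hgg'.2.2.1 y m0 m hpr with ⟨h1, _⟩ | ⟨h1, _⟩
            · exact Or.inl h1
            · exact Or.inr h1
          have hlen0 : l0.length ≤ n := by
            simp only [List.length_append, List.length_singleton] at hlen
            omega
          have hnd0 : l0.Nodup := ((List.sublist_append_left l0 [y]).nodup) hnd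
          rcases List.mem_append.1 hb with hb | hb
          · exact ih l0 s m0 hlen0 hch0 hnd0 hm0 b hb
          · simp only [List.mem_singleton] at hb
            subst hb
            exact Or.inl hyg'
        · -- entry point
          obtain ⟨hmtk, hnoin⟩ := hentry m hm ⟨y, hyArr, ⟨m0, hyinc⟩, hyg'⟩
          obtain ⟨ρ, hρ, hρs, hρt⟩ := hg'tr m (Or.inl hmtk)
          have hρch : ChainIn g' ρ.arrows m t := by
            have := hρ.2.1; rwa [hρs, hρt] at this
          obtain ⟨tri, htri, htrisrc⟩ := tes_source hgg' hg'us hgen htnil_src ρ.arrows m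
            hρch (by simpa [Trail.nil] using hρ.1) hmtk hnoin
          obtain ⟨i, hi⟩ := List.mem_iff_getElem?.1 htri
          have hilen : i < trs.length := by
            rcases List.getElem?_eq_some_iff.1 hi with ⟨h', _⟩; exact h'
          have hilen' : i < Ss.length := by omega
          have hSieq : Ss[i]? = some (Ss[i]'hilen') := List.getElem?_eq_getElem _
          have hSimem : Ss[i]'hilen' ∈ Ss := List.getElem_mem _
          have hTESi : TES g tri (Ss[i]'hilen') := hTES i tri _ hi hSieq
          have htrinv := tes_nodup hgg' huout_g' hgen htnil_src htnil_tgt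
            (by simp [Trail.nil]) rfl tri htri
          have htrind : tri.arrows.Nodup := by simpa [Trail.nil] using htrinv.1
          have htriarr : ∀ b' ∈ tri.arrows, b' ∈ g'.Arr := htrinv.2
          obtain ⟨l3, l4, hsplit, hP4, hP3⟩ := splitMax (fun b' => b' ∉ tri.arrows) l0
          have hch' : ChainIn g (l3 ++ (l4 ++ [y])) s m := by
            rw [← List.append_assoc, ← hsplit]; exact hch
          obtain ⟨s4, hch3, hch4⟩ := chain_append.1 hch'
          have hnd' : (l3 ++ (l4 ++ [y])).Nodup := by
            rw [← List.append_assoc, ← hsplit]; exact hnd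
          have hnd4 : (l4 ++ [y]).Nodup :=
            ((List.sublist_append_right l3 (l4 ++ [y])).nodup) hnd'
          have hdisj : List.Disjoint (l4 ++ [y]) tri.arrows := by
            intro b' hb' hbin
            rcases List.mem_append.1 hb' with hb' | hb'
            · exact hP4 b' hb' hbin
            · simp only [List.mem_singleton] at hb'
              subst hb'
              exact hyg' (htriarr _ hbin)
          have hndfull : ((l4 ++ [y]) ++ tri.arrows).Nodup :=
            List.Nodup.append hnd4 htrind hdisj
          have hmsrc : tri.src ∈ g.Tk := by rw [htrisrc]; exact hsub.1 hmtk
          have hch4' : ChainIn g (l4 ++ [y]) s4 tri.src := by rwa [htrisrc]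
          have hcov4 := tes_covers_arrows hgg hgus hcfg_g hTESi hmsrc (l4 ++ [y]) s4
            (by simp) hch4' hndfull
          have hb' : b ∈ l3 ++ (l4 ++ [y]) := by
            rw [← List.append_assoc, ← hsplit]; exact hb
          rcases List.mem_append.1 hb' with hb3 | hb4
          · rcases hP3 with rfl | ⟨l3', z, rfl, hz⟩
            · simp at hb3
            · have hzin : z ∈ tri.arrows := not_not.1 hz
              have hzg' : z ∈ g'.Arr := htriarr z hzin
              rcases List.mem_append.1 hb3 with hb3' | hbz
              · -- recurse on l3'
                obtain ⟨wz, hch3', hzArr, mz2, hzinc, hmz2⟩ := chain_append.1 hch3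
                have hmz2' : mz2 = s4 := hmz2
                rw [hmz2'] at hzinc
                obtain ⟨pr, hpr, _⟩ := hgg'.2.1.2 z hzg'
                have hpr' : pr = (wz, s4) := inc_unique hgg (hsub.2.2.2.1 hpr) hzinc
                subst hpr'
                have hwz : wz ∈ g'.Tk ∪ g'.Cf := by
                  rcases hgg'.2.2.1 z wz s4 hpr with ⟨h1, _⟩ | ⟨h1, _⟩
                  · exact Or.inl h1
                  · exact Or.inr h1
                have hlen3 : l3'.length ≤ n := by
                  have h0 : l0.length = l3'.length + 1 + l4.length := by
                    rw [hsplit]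
                    simp only [List.length_append, List.length_singleton]
                  simp only [List.length_append, List.length_singleton] at hlen
                  omega
                have hnd3 : l3'.Nodup :=
                  ((List.sublist_append_left l3' [z]).trans
                    (List.sublist_append_left (l3' ++ [z]) _)).nodup hnd'
                exact ih l3' s wz hlen3 hch3' hnd3 hwz b hb3'
              · simp only [List.mem_singleton] at hbz
                subst hbz
                exact Or.inl hzg'
          · exact Or.inr ⟨_, hSimem, hcov4 b hb4⟩
  -- coverage of all arrows of g
  have harrCov : ∀ b ∈ g.Arr, b ∈ g'.Arr ∨ ∃ Si ∈ Ss, b ∈ trailArrowSet Si := by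
    intro b hb
    obtain ⟨pr, hpr, _⟩ := hgg.2.1.2 b hb
    have hw : pr.2 ∈ g.Tk ∪ g.Cf := by
      rcases hgg.2.2.1 b pr.1 pr.2 hpr with ⟨_, h⟩ | ⟨_, h⟩
      · exact Or.inr h
      · exact Or.inl h
    obtain ⟨τ, hτ, hτs, hτt⟩ := hgtr pr.2 hw
    have hτch : ChainIn g τ.arrows pr.2 t := by
      have := hτ.2.1; rwa [hτs, hτt] at this
    by_cases hbτ : b ∈ τ.arrows
    · exact C2 τ.arrows.length τ.arrows pr.2 t le_rfl hτch hτ.1 (Or.inl htg') b hbτ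
    · exact C2 (b :: τ.arrows).length (b :: τ.arrows) pr.1 t le_rfl
        ⟨hb, pr.2, hpr, hτch⟩ (List.nodup_cons.2 ⟨hbτ, hτ.1⟩) (Or.inl htg') b
        (List.mem_cons_self)
  -- coverage of tokens
  have htkCov : ∀ x ∈ g.Tk, x ∈ g'.Tk ∨ ∃ Si ∈ Ss, x ∈ trailVertexSet g Si := by
    intro x hx
    obtain ⟨τ, hτ, hτs, hτt⟩ := hgtr x (Or.inl hx)
    have hτch : ChainIn g τ.arrows x t := by
      have := hτ.2.1; rwa [hτs, hτt] at this
    cases hτa : τ.arrows with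
    | nil =>
        rw [hτa] at hτch
        have hxt : x = t := hτch
        exact Or.inl (hxt ▸ htg')
    | cons a0 rest =>
        rw [hτa] at hτch
        obtain ⟨ha0Arr, mid, ha0inc, _⟩ := hτch
        rcases harrCov a0 ha0Arr with h | ⟨Si, hSi, haSi⟩
        · obtain ⟨pr, hpr, _⟩ := hgg'.2.1.2 a0 h
          have hpr' : pr = (x, mid) := inc_unique hgg (hsub.2.2.2.1 hpr) ha0inc
          subst hpr'
          rcases hgg'.2.2.1 a0 x mid hpr with ⟨h1, _⟩ | ⟨h1, _⟩
          · exact Or.inl h1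
          · exact (not_tk_cf hgg hx (hsub.2.1 h1)).elim
        · exact Or.inr ⟨Si, hSi, Or.inl ⟨a0, haSi, mid, Or.inl ha0inc⟩⟩
  -- coverage of configurators
  have hcfCov : ∀ x ∈ g.Cf, x ∈ g'.Cf ∨ ∃ Si ∈ Ss, x ∈ trailVertexSet g Si := by
    intro x hx
    obtain ⟨τ, hτ, hτs, hτt⟩ := hgtr x (Or.inr hx)
    have hτch : ChainIn g τ.arrows x t := by
      have := hτ.2.1; rwa [hτs, hτt] at this
    cases hτa : τ.arrows with
    | nil =>
        rw [hτa] at hτch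
        have hxt : x = t := hτch
        exact (not_tk_cf hgg htg (hxt ▸ hx)).elim
    | cons a0 rest =>
        rw [hτa] at hτch
        obtain ⟨ha0Arr, mid, ha0inc, _⟩ := hτch
        rcases harrCov a0 ha0Arr with h | ⟨Si, hSi, haSi⟩
        · obtain ⟨pr, hpr, _⟩ := hgg'.2.1.2 a0 h
          have hpr' : pr = (x, mid) := inc_unique hgg (hsub.2.2.2.1 hpr) ha0inc
          subst hpr'
          rcases hgg'.2.2.1 a0 x mid hpr with ⟨h1, _⟩ | ⟨h1, _⟩
          · exact (not_tk_cf hgg (hsub.1 h1) hx).elim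
          · exact Or.inl h1
        · exact Or.inr ⟨Si, hSi, Or.inl ⟨a0, haSi, mid, Or.inl ha0inc⟩⟩
  -- assembly
  apply PreGraph.ext_aux
  · apply Set.ext; intro x
    rw [foldl_union_mem (fun p => p.Tk) (fun a b => rfl)]
    constructor
    · intro hx
      rcases htkCov x hx with h | ⟨Si, hSi, hv⟩
      · exact Or.inl h
      · exact Or.inr ⟨trGraph g Si, List.mem_map_of_mem hSi, hx, hv⟩
    · rintro (h | ⟨p, hp, hxp⟩)
      · exact hsub.1 h
      · obtain ⟨Si, hSi, rfl⟩ := List.mem_map.1 hp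
        exact hxp.1
  · apply Set.ext; intro x
    rw [foldl_union_mem (fun p => p.Cf) (fun a b => rfl)]
    constructor
    · intro hx
      rcases hcfCov x hx with h | ⟨Si, hSi, hv⟩
      · exact Or.inl h
      · exact Or.inr ⟨trGraph g Si, List.mem_map_of_mem hSi, hx, hv⟩
    · rintro (h | ⟨p, hp, hxp⟩)
      · exact hsub.2.1 h
      · obtain ⟨Si, hSi, rfl⟩ := List.mem_map.1 hp
        exact hxp.1
  · apply Set.ext; intro x
    rw [foldl_union_mem (fun p => p.Arr) (fun a b => rfl)]
    constructor
    · intro hx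
      rcases harrCov x hx with h | ⟨Si, hSi, hv⟩
      · exact Or.inl h
      · exact Or.inr ⟨trGraph g Si, List.mem_map_of_mem hSi, hx, hv⟩
    · rintro (h | ⟨p, hp, hxp⟩)
      · exact hsub.2.2.1 h
      · obtain ⟨Si, hSi, rfl⟩ := List.mem_map.1 hp
        exact hxp.1
  · apply Set.ext; intro q
    rw [foldl_union_mem (fun p => p.inc) (fun a b => rfl)]
    constructor
    · intro hq
      rcases harrCov q.1 (hgg.2.1.1 q hq) with h | ⟨Si, hSi, hv⟩
      · exact Or.inl (mem_of_function_sub hgg.2.1 hgg'.2.1 hsub.2.2.2.1 hq h)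
      · exact Or.inr ⟨trGraph g Si, List.mem_map_of_mem hSi, hq, hv⟩
    · rintro (h | ⟨p, hp, hqp⟩)
      · exact hsub.2.2.2.1 h
      · obtain ⟨Si, hSi, rfl⟩ := List.mem_map.1 hp
        exact hqp.1
  · apply Set.ext; intro q
    rw [foldl_union_mem (fun p => p.ia) (fun a b => rfl)]
    constructor
    · intro hq
      rcases harrCov q.1 (hgg.2.2.2.1.1 q hq) with h | ⟨Si, hSi, hv⟩
      · exact Or.inl (mem_of_function_sub hgg.2.2.2.1 hgg'.2.2.2.1 hsub.2.2.2.2.1 hq h)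
      · exact Or.inr ⟨trGraph g Si, List.mem_map_of_mem hSi, hq, hv⟩
    · rintro (h | ⟨p, hp, hqp⟩)
      · exact hsub.2.2.2.2.1 h
      · obtain ⟨Si, hSi, rfl⟩ := List.mem_map.1 hp
        exact hqp.1
  · apply Set.ext; intro q
    rw [foldl_union_mem (fun p => p.tl) (fun a b => rfl)]
    constructor
    · intro hq
      rcases htkCov q.1 (hgg.2.2.2.2.1.1 q hq) with h | ⟨Si, hSi, hv⟩
      · exact Or.inl (mem_of_function_sub hgg.2.2.2.2.1 hgg'.2.2.2.2.1
          hsub.2.2.2.2.2.1 hq h)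
      · exact Or.inr ⟨trGraph g Si, List.mem_map_of_mem hSi, hq, hv⟩
    · rintro (h | ⟨p, hp, hqp⟩)
      · exact hsub.2.2.2.2.2.1 h
      · obtain ⟨Si, hSi, rfl⟩ := List.mem_map.1 hp
        exact hqp.1
  · apply Set.ext; intro q
    rw [foldl_union_mem (fun p => p.cl) (fun a b => rfl)]
    constructor
    · intro hq
      rcases hcfCov q.1 (hgg.2.2.2.2.2.1 q hq) with h | ⟨Si, hSi, hv⟩
      · exact Or.inl (mem_of_function_sub hgg.2.2.2.2.2 hgg'.2.2.2.2.2
          hsub.2.2.2.2.2.2 hq h)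
      · exact Or.inr ⟨trGraph g Si, List.mem_map_of_mem hSi, hq, hv⟩
    · rintro (h | ⟨p, hp, hqp⟩)
      · exact hsub.2.2.2.2.2.2 h
      · obtain ⟨Si, hSi, rfl⟩ := List.mem_map.1 hp
        exact hqp.1

end RST
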